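/- Let K be a field of characteristic zero and α₁, …, α_s ∈ K distinct. Let n = (n₁, …, n_s) ∈ ℕ^s have all coordinates positive, and let ℓ ∈ {1, …, s}. Let A_n be the s×s matrix over K whose i-th row is a_{n−e_i}, and similarly A_{n+e_ℓ}. Let M_{n,ℓ} be the s×s matrix whose (i,j) entry is n_j + (α_i − α_ℓ) if j = i, and n_j otherwise. Then A_{n+e_ℓ} = M_{n,ℓ} · A_n. -/
import Mathlib


open Polynomial

/-- `f_m(z) = ∏ᵢ (z − αᵢ)^{mᵢ}`. -/
noncomputable def fpoly {K : Type*} [Field K] {s : ℕ} (α : Fin s → K) (m : Fin s → ℕ) :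
    K[X] := ∏ i, (X - C (α i)) ^ m i

/-- `P_m(z) = Σ_{k=0}^{M} f_m^{(k)}(z)`, the sum of `f_m` and all its derivatives. -/
noncomputable def Ppoly {K : Type*} [Field K] {s : ℕ} (α : Fin s → K) (m : Fin s → ℕ) :
    K[X] := ∑ k ∈ Finset.range (∑ i, m i + 1), derivative^[k] (fpoly α m)

/-- The Hermite approximation `a_m = (P_m(α₁), …, P_m(α_s))`. -/
noncomputable def aH {K : Type*} [Field K] {s : ℕ} (α : Fin s → K) (m : Fin s → ℕ) :
    Fin s → K := fun i => (Ppoly α m).eval (α i)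

/-- The matrix `A_n` whose `i`-th row is `a_{n−eᵢ}`. -/
noncomputable def Amat {K : Type*} [Field K] {s : ℕ} (α : Fin s → K) (n : Fin s → ℕ) :
    Matrix (Fin s) (Fin s) K :=
  Matrix.of fun i j => aH α (fun k => n k - if k = i then 1 else 0) j

lemma derivative_finset_prod {K : Type*} [Field K] {ι : Type*} [DecidableEq ι]
    (t : Finset ι) (f : ι → K[X]) :
    derivative (∏ i ∈ t, f i) = ∑ i ∈ t, (∏ j ∈ t.erase i, f j) * derivative (f i) := by
  induction t using Finset.induction_on with
  | empty => simp
  | @insert a u ha ih =>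
    rw [Finset.prod_insert ha, derivative_mul, ih, Finset.sum_insert ha,
      Finset.erase_insert ha, Finset.mul_sum]
    congr 1
    · ring
    · refine Finset.sum_congr rfl fun i hi => ?_
      have hia : a ≠ i := fun h => ha (h ▸ hi)
      rw [Finset.erase_insert_of_ne hia,
        Finset.prod_insert (fun h => ha (Finset.mem_of_mem_erase h)), mul_assoc]

lemma fpoly_natDegree_le {K : Type*} [Field K] {s : ℕ} (α : Fin s → K) (m : Fin s → ℕ) :
    (fpoly α m).natDegree ≤ ∑ i, m i := by
  refine (Polynomial.natDegree_prod_le _ _).trans ?_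
  refine Finset.sum_le_sum fun i _ => ?_
  calc ((X - C (α i)) ^ m i).natDegree ≤ m i * (X - C (α i)).natDegree :=
        natDegree_pow_le
    _ ≤ m i := by rw [natDegree_X_sub_C]; omega

lemma Ppoly_sub_deriv {K : Type*} [Field K] {s : ℕ} (α : Fin s → K) (m : Fin s → ℕ) :
    Ppoly α m - derivative (Ppoly α m) = fpoly α m := by
  unfold Ppoly
  rw [derivative_sum, ← Finset.sum_sub_distrib]
  have : ∀ k ∈ Finset.range (∑ i, m i + 1),
      derivative^[k] (fpoly α m) - derivative (derivative^[k] (fpoly α m)) =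
      derivative^[k] (fpoly α m) - derivative^[k+1] (fpoly α m) := by
    intro k _; rw [Function.iterate_succ_apply']
  rw [Finset.sum_congr rfl this, Finset.sum_range_sub' (fun k => derivative^[k] (fpoly α m))]
  simp only [Function.iterate_zero_apply]
  rw [Polynomial.iterate_derivative_eq_zero (lt_of_le_of_lt (fpoly_natDegree_le α m)
    (Nat.lt_succ_self _)), sub_zero]

lemma sub_deriv_injective {K : Type*} [Field K] :
    Function.Injective (fun q : K[X] => q - derivative q) := by
  intro p q h
  simp only at h
  by_contra hpq
  have hne : p - q ≠ 0 := sub_ne_zero.mpr hpq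
  have hd : derivative (p - q) = p - q := by
    rw [derivative_sub]
    linear_combination -h
  have := Polynomial.degree_derivative_lt hne
  rw [hd] at this
  exact lt_irrefl _ this

lemma fpoly_succ {K : Type*} [Field K] {s : ℕ} (α : Fin s → K) (m : Fin s → ℕ) (ℓ : Fin s) :
    fpoly α (fun t => m t + if t = ℓ then 1 else 0) = (X - C (α ℓ)) * fpoly α m := by
  unfold fpoly
  have h1 : ∀ t : Fin s, (X - C (α t)) ^ (m t + if t = ℓ then 1 else 0) =
      (X - C (α t)) ^ m t * (X - C (α t)) ^ (if t = ℓ then 1 else 0) := fun t => pow_add _ _ _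
  rw [Finset.prod_congr rfl (fun t _ => h1 t), Finset.prod_mul_distrib]
  have h2 : ∀ t : Fin s, (X - C (α t)) ^ (if t = ℓ then 1 else 0) =
      if t = ℓ then (X - C (α t)) else 1 := by
    intro t; split <;> simp
  rw [Finset.prod_congr rfl (fun t _ => h2 t), Finset.prod_ite_eq' Finset.univ ℓ
    (fun t => X - C (α t))]
  simp [mul_comm]

lemma deriv_fpoly {K : Type*} [Field K] {s : ℕ} (α : Fin s → K) (n : Fin s → ℕ)
    (hn : ∀ i, 0 < n i) :
    derivative (fpoly α n) =
      ∑ k, C (n k : K) * fpoly α (fun t => n t - if t = k then 1 else 0) := by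
  unfold fpoly
  rw [derivative_finset_prod]
  refine Finset.sum_congr rfl fun k _ => ?_
  rw [derivative_X_sub_C_pow]
  have h2 : (∏ i, (X - C (α i)) ^ (n i - if i = k then 1 else 0)) =
      (∏ j ∈ Finset.univ.erase k, (X - C (α j)) ^ n j) * (X - C (α k)) ^ (n k - 1) := by
    rw [← Finset.prod_erase_mul _ _ (Finset.mem_univ k), if_pos rfl]
    congr 1
    refine Finset.prod_congr rfl fun t ht => ?_
    rw [if_neg (Finset.ne_of_mem_erase ht), Nat.sub_zero]
  simp only [h2]
  ring

lemma fpoly_eval_self {K : Type*} [Field K] {s : ℕ} (α : Fin s → K) (n : Fin s → ℕ)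
    (j : Fin s) (hj : 0 < n j) : (fpoly α n).eval (α j) = 0 := by
  unfold fpoly
  rw [eval_prod]
  refine Finset.prod_eq_zero (Finset.mem_univ j) ?_
  rw [eval_pow, eval_sub, eval_X, eval_C, sub_self, zero_pow hj.ne']

/-- The key polynomial identity. -/
lemma key_identity {K : Type*} [Field K] {s : ℕ} (α : Fin s → K) (n : Fin s → ℕ)
    (hn : ∀ i, 0 < n i) (ℓ i : Fin s) :
    Ppoly α (fun t => (n t + if t = ℓ then 1 else 0) - if t = i then 1 else 0) =
      (∑ k, C (n k : K) * Ppoly α (fun t => n t - if t = k then 1 else 0)) +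
      C (α i - α ℓ) * Ppoly α (fun t => n t - if t = i then 1 else 0) + fpoly α n := by
  apply sub_deriv_injective
  simp only [derivative_add, derivative_sum, derivative_mul, derivative_C, zero_mul, zero_add]
  have hmain : (fun t => (n t + if t = ℓ then 1 else 0) - if t = i then 1 else 0) =
      (fun t => (n t - if t = i then 1 else 0) + if t = ℓ then 1 else 0) := by
    funext t
    have := hn t
    split <;> split <;> omega
  rw [hmain, Ppoly_sub_deriv, fpoly_succ]
  have hfn : fpoly α n = (X - C (α i)) * fpoly α (fun t => n t - if t = i then 1 else 0) := by
    rw [← fpoly_succ]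
    congr 1
    funext t
    have := hn t
    split <;> omega
  have hP : ∀ (m : Fin s → ℕ), derivative (Ppoly α m) = Ppoly α m - fpoly α m := by
    intro m
    linear_combination -(Ppoly_sub_deriv α m)
  rw [deriv_fpoly α n hn, hfn]
  simp only [hP, mul_sub, Finset.sum_sub_distrib, map_sub]
  ring

/-- **Hermite's recurrence.** For `n` with all coordinates positive and
`ℓ ∈ {1,…,s}`, one has `A_{n+e_ℓ} = M_{n,ℓ} · A_n` where `M_{n,ℓ}` has `(i,j)` entry
`n_j + (α_i − α_ℓ)` if `j = i` and `n_j` otherwise. -/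
theorem stmt17 {K : Type*} [Field K] [CharZero K] {s : ℕ} (α : Fin s → K)
    (hα : Function.Injective α) (n : Fin s → ℕ) (hn : ∀ i, 0 < n i) (ℓ : Fin s) :
    Amat α (fun t => n t + if t = ℓ then 1 else 0) =
      (Matrix.of fun i j : Fin s =>
        (n j : K) + if j = i then α i - α ℓ else 0) * Amat α n := by
  ext i j
  rw [Matrix.mul_apply]
  simp only [Amat, Matrix.of_apply, aH]
  have hkey := congrArg (Polynomial.eval (α j)) (key_identity α n hn ℓ i)
  simp only [eval_add, eval_finset_sum, eval_mul, eval_C] at hkey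
  rw [fpoly_eval_self α n j (hn j), add_zero] at hkey
  rw [hkey]
  have hsplit : ∀ k : Fin s, ((n k : K) + if k = i then α i - α ℓ else 0) *
      (Ppoly α fun t => n t - if t = k then 1 else 0).eval (α j) =
      (n k : K) * (Ppoly α fun t => n t - if t = k then 1 else 0).eval (α j)
        + (if k = i then (α i - α ℓ) *
            (Ppoly α fun t => n t - if t = k then 1 else 0).eval (α j) else 0) := by
    intro k; split <;> ring
  rw [Finset.sum_congr rfl fun k _ => hsplit k, Finset.sum_add_distrib,
    Finset.sum_ite_eq' Finset.univ i]
  simp
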